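/- The divergence (trace of the Jacobian) of the full block soft thresholding estimator μ̂(y), defined blockwise on a partition B of {1,…,N} as μ̂(y)_b = S_λ(y_b), equals |J| − λ Σ_{b⊂J} (|b|−1)/‖y_b‖, where J is the union of blocks b with ‖y_b‖ > λ, at any point y where no block satisfies ‖y_b‖ = λ. -/

import Mathlib

open Finset

/-- Euclidean norm of the subvector of `y` on the block `k`. -/
noncomputable def blockNorm {N K : ℕ} (c : Fin N → Fin K) (y : Fin N → ℝ) (k : Fin K) : ℝ :=
  Real.sqrt (∑ i ∈ Finset.univ.filter (fun i => c i = k), y i ^ 2)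

/-- The full block soft thresholding estimator on `ℝ^N`, applied blockwise. -/
noncomputable def blockSoftEst {N K : ℕ} (lam : ℝ) (c : Fin N → Fin K)
    (y : Fin N → ℝ) : Fin N → ℝ := fun i =>
  if blockNorm c y (c i) < lam then 0
  else (1 - lam / blockNorm c y (c i)) * y i

noncomputable def bstLq {N K : ℕ} (c : Fin N → Fin K) (y : Fin N → ℝ) (k : Fin K) :
    (Fin N → ℝ) →L[ℝ] ℝ :=
  ∑ j ∈ Finset.univ.filter (fun i => c i = k),
    ((2:ℕ) * y j ^ 1) • ContinuousLinearMap.proj (R := ℝ) (φ := fun _ : Fin N => ℝ) j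

noncomputable def bstLn {N K : ℕ} (c : Fin N → Fin K) (y : Fin N → ℝ) (k : Fin K) :
    (Fin N → ℝ) →L[ℝ] ℝ :=
  (1 / (2 * blockNorm c y k)) • bstLq c y k

noncomputable def bstD {N K : ℕ} (lam : ℝ) (c : Fin N → Fin K) (y : Fin N → ℝ) (i : Fin N) :
    (Fin N → ℝ) →L[ℝ] ℝ :=
  if lam < blockNorm c y (c i) then
    (1 - lam * (blockNorm c y (c i))⁻¹) • ContinuousLinearMap.proj i
      + y i • ((0 : (Fin N → ℝ) →L[ℝ] ℝ)
          - lam • ((-((blockNorm c y (c i)) ^ 2)⁻¹) • bstLn c y (c i)))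
  else 0

lemma bst_hasQ {N K : ℕ} (c : Fin N → Fin K) (y : Fin N → ℝ) (k : Fin K) :
    HasFDerivAt (fun z : Fin N → ℝ => ∑ j ∈ Finset.univ.filter (fun i => c i = k), z j ^ 2)
      (bstLq c y k) y := by
  apply HasFDerivAt.fun_sum
  intro j _
  exact (hasDerivAt_pow 2 (y j)).comp_hasFDerivAt y (hasFDerivAt_apply (𝕜 := ℝ) (F' := fun _ : Fin N => ℝ) j y)

lemma bst_hasN {N K : ℕ} (c : Fin N → Fin K) (y : Fin N → ℝ) (k : Fin K)
    (hq : (∑ j ∈ Finset.univ.filter (fun i => c i = k), y j ^ 2) ≠ 0) :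
    HasFDerivAt (fun z : Fin N → ℝ => blockNorm c z k) (bstLn c y k) y :=
  (bst_hasQ c y k).sqrt hq

lemma bst_hasComp {N K : ℕ} (lam : ℝ) (c : Fin N → Fin K) (y : Fin N → ℝ) (i : Fin N)
    (hn : blockNorm c y (c i) ≠ 0)
    (hq : (∑ j ∈ Finset.univ.filter (fun j => c j = c i), y j ^ 2) ≠ 0)
    (h : lam < blockNorm c y (c i)) :
    HasFDerivAt (fun z : Fin N → ℝ => (1 - lam * (blockNorm c z (c i))⁻¹) * z i)
      (bstD lam c y i) y := by
  have hinv : HasFDerivAt (fun z : Fin N → ℝ => (blockNorm c z (c i))⁻¹)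
      ((-((blockNorm c y (c i)) ^ 2)⁻¹) • bstLn c y (c i)) y :=
    (hasDerivAt_inv hn).comp_hasFDerivAt y (bst_hasN c y (c i) hq)
  have h1 : HasFDerivAt (fun z : Fin N → ℝ => 1 - lam * (blockNorm c z (c i))⁻¹)
      ((0 : (Fin N → ℝ) →L[ℝ] ℝ)
        - lam • ((-((blockNorm c y (c i)) ^ 2)⁻¹) • bstLn c y (c i))) y :=
    (hasFDerivAt_const 1 y).sub (hinv.const_mul lam)
  have := h1.mul (hasFDerivAt_apply i y)
  rw [bstD, if_pos h]
  exact this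

lemma bst_Lq_single {N K : ℕ} (c : Fin N → Fin K) (y : Fin N → ℝ) (i : Fin N) :
    bstLq c y (c i) (Pi.single i 1) = 2 * y i := by
  rw [bstLq, ContinuousLinearMap.sum_apply]
  rw [Finset.sum_eq_single i]
  · simp
  · intro j _ hj
    simp [Pi.single_eq_of_ne hj]
  · intro hi
    simp at hi

lemma bst_value_active {N K : ℕ} (lam : ℝ) (c : Fin N → Fin K) (y : Fin N → ℝ) (i : Fin N)
    (hn : blockNorm c y (c i) ≠ 0) (h : lam < blockNorm c y (c i)) :
    bstD lam c y i (Pi.single i 1)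
      = 1 - lam / blockNorm c y (c i) + lam * y i ^ 2 / blockNorm c y (c i) ^ 3 := by
  rw [bstD, if_pos h]
  simp only [ContinuousLinearMap.add_apply, ContinuousLinearMap.smul_apply,
    ContinuousLinearMap.proj_apply, ContinuousLinearMap.sub_apply,
    ContinuousLinearMap.zero_apply, bstLn, ContinuousLinearMap.smul_apply, bst_Lq_single,
    Pi.single_eq_same, smul_eq_mul]
  field_simp
  ring

/-- At any `y` with `‖y_b‖ ≠ λ` for every block `b`, the blockwise soft
thresholding estimator is differentiable, and the trace of its Jacobian
(its divergence) equals `|J| − λ Σ_{b ⊂ J} (|b| − 1)/‖y_b‖`, where `J` is the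
union of the blocks `b` with `‖y_b‖ > λ`. -/
theorem stmt_11 {N K : ℕ} (lam : ℝ) (hlam : 0 < lam) (c : Fin N → Fin K)
    (y : Fin N → ℝ) (hy : ∀ k : Fin K, blockNorm c y k ≠ lam) :
    ∃ D : (Fin N → ℝ) →L[ℝ] (Fin N → ℝ),
      HasFDerivAt (blockSoftEst lam c) D y ∧
      ∑ i, D (Pi.single i 1) i =
        (∑ k ∈ Finset.univ.filter (fun k => lam < blockNorm c y k),
            ((Finset.univ.filter (fun i => c i = k)).card : ℝ)) -
          lam * ∑ k ∈ Finset.univ.filter (fun k => lam < blockNorm c y k),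
            (((Finset.univ.filter (fun i => c i = k)).card : ℝ) - 1) /
              blockNorm c y k := by
  have hcont : ∀ k : Fin K, Continuous (fun z : Fin N → ℝ => blockNorm c z k) := by
    intro k
    unfold blockNorm
    fun_prop
  have hq0 : ∀ k : Fin K, 0 ≤ ∑ j ∈ Finset.univ.filter (fun i => c i = k), y j ^ 2 :=
    fun k => Finset.sum_nonneg fun j _ => sq_nonneg _
  have hsq : ∀ k : Fin K,
      ∑ j ∈ Finset.univ.filter (fun i => c i = k), y j ^ 2 = blockNorm c y k ^ 2 :=
    fun k => (Real.sq_sqrt (hq0 k)).symm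
  have hnpos : ∀ k : Fin K, lam < blockNorm c y k → blockNorm c y k ≠ 0 :=
    fun k hk => ne_of_gt (hlam.trans hk)
  have hqne : ∀ k : Fin K, lam < blockNorm c y k →
      (∑ j ∈ Finset.univ.filter (fun i => c i = k), y j ^ 2) ≠ 0 := by
    intro k hk
    rw [hsq k]
    exact pow_ne_zero 2 (hnpos k hk)
  -- the local model
  have hg : HasFDerivAt
      (fun z (i : Fin N) => if lam < blockNorm c y (c i) then
        (1 - lam * (blockNorm c z (c i))⁻¹) * z i else 0)
      (ContinuousLinearMap.pi (bstD lam c y)) y := by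
    rw [hasFDerivAt_pi]
    intro i
    by_cases h : lam < blockNorm c y (c i)
    · simp only [if_pos h]
      exact bst_hasComp lam c y i (hnpos _ h) (hqne _ h) h
    · simp only [if_neg h, bstD]
      exact hasFDerivAt_const 0 y
  have hev : ∀ᶠ z in nhds y, ∀ k : Fin K,
      (lam < blockNorm c y k → lam < blockNorm c z k) ∧
      (blockNorm c y k < lam → blockNorm c z k < lam) := by
    rw [Filter.eventually_all]
    intro k
    rcases lt_or_gt_of_ne (hy k) with h | h
    · filter_upwards [(hcont k).continuousAt.preimage_mem_nhds (Iio_mem_nhds h)] with z hz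
      exact ⟨fun h' => absurd h' (not_lt.2 h.le), fun _ => hz⟩
    · filter_upwards [(hcont k).continuousAt.preimage_mem_nhds (Ioi_mem_nhds h)] with z hz
      exact ⟨fun _ => hz, fun h' => absurd h (not_lt.2 h'.le)⟩
  have heq : blockSoftEst lam c =ᶠ[nhds y]
      (fun z (i : Fin N) => if lam < blockNorm c y (c i) then
        (1 - lam * (blockNorm c z (c i))⁻¹) * z i else 0) := by
    filter_upwards [hev] with z hz
    funext i
    by_cases h : lam < blockNorm c y (c i)
    · have h1 := (hz (c i)).1 h
      rw [blockSoftEst, if_neg (not_lt.2 h1.le), if_pos h, div_eq_mul_inv]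
    · have h0 : blockNorm c y (c i) < lam := lt_of_le_of_ne (not_lt.1 h) (hy (c i))
      have h1 := (hz (c i)).2 h0
      rw [blockSoftEst, if_pos h1, if_neg h]
  refine ⟨ContinuousLinearMap.pi (bstD lam c y), hg.congr_of_eventuallyEq heq, ?_⟩
  simp only [ContinuousLinearMap.pi_apply]
  rw [← Finset.sum_fiberwise Finset.univ c (fun i => bstD lam c y i (Pi.single i 1))]
  rw [Finset.mul_sum, ← Finset.sum_sub_distrib, Finset.sum_filter]
  refine Finset.sum_congr rfl fun k _ => ?_
  by_cases hk : lam < blockNorm c y k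
  · rw [if_pos hk]
    have hn : blockNorm c y k ≠ 0 := hnpos k hk
    rw [Finset.sum_congr rfl (fun i hi => ?_ :
        ∀ i ∈ Finset.univ.filter (fun i => c i = k),
          bstD lam c y i (Pi.single i 1)
            = 1 - lam / blockNorm c y k + lam * y i ^ 2 / blockNorm c y k ^ 3)]
    · rw [Finset.sum_add_distrib, Finset.sum_const, nsmul_eq_mul,
        ← Finset.sum_div, ← Finset.mul_sum, hsq k]
      field_simp
      ring
    · have hci : c i = k := (Finset.mem_filter.1 hi).2
      rw [bst_value_active lam c y i (by rw [hci]; exact hn) (by rw [hci]; exact hk), hci]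
  · rw [if_neg hk]
    refine Finset.sum_eq_zero fun i hi => ?_
    have hci : c i = k := (Finset.mem_filter.1 hi).2
    rw [bstD, hci, if_neg hk]
    simp
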